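/- If R is an infinite (possibly nonunital) ring, then the cardinality of the set of one-generated subrings of R equals the cardinality of R. -/

import Mathlib

open Submodule Pointwise

namespace Stmt2Aux
variable {R : Type*} [NonUnitalRing R]

/-- `pw a n = a^(n+1)` in a nonunital ring. -/
def pw (a : R) : ℕ → R
  | 0 => a
  | n+1 => pw a n * a

@[simp] lemma pw_zero (a : R) : pw a 0 = a := rfl
lemma pw_succ (a : R) (n : ℕ) : pw a (n+1) = pw a n * a := rfl

lemma pw_add (a : R) (m n : ℕ) : pw a (m + n + 1) = pw a m * pw a n := by
  induction n with
  | zero => rfl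
  | succ n ih =>
      have : m + (n+1) + 1 = (m + n + 1) + 1 := by omega
      rw [this, pw_succ, ih, pw_succ, mul_assoc]

lemma pw_comm (a : R) (m n : ℕ) : pw a m * pw a n = pw a n * pw a m := by
  rw [← pw_add, ← pw_add, add_comm m n]

lemma pw_pw (a : R) (s i : ℕ) : pw (pw a s) i = pw a (s + i * (s + 1)) := by
  induction i with
  | zero => simp
  | succ i ih =>
      rw [pw_succ, ih, pw_comm, ← pw_add]
      congr 1
      ring

lemma pw_zsmul (a : R) (z : ℤ) (i : ℕ) : pw (z • a) i = z ^ (i + 1) • pw a i := by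
  induction i with
  | zero => simp
  | succ i ih =>
      rw [pw_succ, ih, pw_succ, smul_mul_assoc, mul_smul_comm, smul_smul, ← pow_succ]

lemma pw_smul_zero (a : R) (z : ℤ) (h : z • a = 0) (i : ℕ) : z • pw a i = 0 := by
  induction i with
  | zero => simpa
  | succ i ih => rw [pw_succ, ← smul_mul_assoc, ih, zero_mul]

lemma pw_idem (v : R) (h : v * v = v) (i : ℕ) : pw v i = v := by
  induction i with
  | zero => rfl
  | succ i ih => rw [pw_succ, ih, h]

/-- The ℤ-span of the positive powers of `a`. -/
def pws (a : R) : Submodule ℤ R := span ℤ (Set.range (pw a))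

lemma pw_mem_pws (a : R) (n : ℕ) : pw a n ∈ pws a := subset_span ⟨n, rfl⟩

lemma mul_pw_mem (a : R) (t : ℕ) {x : R} (hx : x ∈ pws a) : x * pw a t ∈ pws a := by
  induction hx using Submodule.span_induction with
  | mem y hy => obtain ⟨m, rfl⟩ := hy; rw [← pw_add]; exact pw_mem_pws a _
  | zero => rw [zero_mul]; exact zero_mem _
  | add y z _ _ hy hz => rw [add_mul]; exact add_mem hy hz
  | smul z y _ hy => rw [smul_mul_assoc]; exact smul_mem _ _ hy

lemma mul_mem_pws (a : R) {x y : R} (hx : x ∈ pws a) (hy : y ∈ pws a) : x * y ∈ pws a := by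
  induction hy using Submodule.span_induction with
  | mem y hy => obtain ⟨m, rfl⟩ := hy; exact mul_pw_mem a _ hx
  | zero => rw [mul_zero]; exact zero_mem _
  | add y z _ _ h1 h2 => rw [mul_add]; exact add_mem h1 h2
  | smul z y _ h1 => rw [mul_smul_comm]; exact smul_mem _ _ h1

/-- The span of powers, as a nonunital subring. -/
def pwsSR (a : R) : NonUnitalSubring R where
  carrier := (pws a : Set R)
  zero_mem' := zero_mem _
  add_mem' := fun hx hy => add_mem hx hy
  neg_mem' := fun hx => neg_mem hx
  mul_mem' := fun hx hy => mul_mem_pws a hx hy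

lemma closure_carrier_eq_pws (a : R) :
    ((NonUnitalSubring.closure {a} : NonUnitalSubring R) : Set R) = (pws a : Set R) := by
  apply Set.Subset.antisymm
  · have h : NonUnitalSubring.closure {a} ≤ pwsSR a := by
      rw [NonUnitalSubring.closure_le]
      intro x hx
      simp only [Set.mem_singleton_iff] at hx
      subst hx
      exact pw_mem_pws x 0
    exact h
  · intro x hx
    have : pws a ≤ AddSubgroup.toIntSubmodule (NonUnitalSubring.closure {a}).toAddSubgroup := by
      rw [pws, span_le]
      rintro y ⟨n, rfl⟩
      show pw a n ∈ NonUnitalSubring.closure {a}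
      induction n with
      | zero => exact NonUnitalSubring.subset_closure rfl
      | succ n ih => exact mul_mem ih (NonUnitalSubring.subset_closure rfl)
    exact this hx

lemma mem_closure_singleton_iff (a x : R) :
    x ∈ NonUnitalSubring.closure {a} ↔ x ∈ pws a := by
  have h := closure_carrier_eq_pws a
  constructor
  · intro hx
    have : x ∈ ((NonUnitalSubring.closure {a} : NonUnitalSubring R) : Set R) := hx
    rwa [h] at this
  · intro hx
    show x ∈ ((NonUnitalSubring.closure {a} : NonUnitalSubring R) : Set R)
    rw [h]; exact hx

lemma mem_psmul_iff {z : ℤ} {A : Submodule ℤ R} {x : R} : x ∈ z • A ↔ ∃ y ∈ A, z • y = x := by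
  rw [← SetLike.mem_coe, Submodule.coe_pointwise_smul]
  exact Set.mem_smul_set

lemma psmul_mono {z : ℤ} {A B : Submodule ℤ R} (h : A ≤ B) : z • A ≤ z • B := by
  intro x hx
  rw [← SetLike.mem_coe, Submodule.coe_pointwise_smul] at hx ⊢
  exact Set.smul_set_mono h hx

lemma psmul_le_self {z : ℤ} {A : Submodule ℤ R} : z • A ≤ A := by
  intro x hx
  rcases mem_psmul_iff.mp hx with ⟨y, hy, rfl⟩
  exact smul_mem _ _ hy

lemma coprime_prime_of_not_dvd (p : ℕ) (hp : p.Prime) (z : ℤ) (h : ¬ ((p:ℤ) ∣ z)) :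
    IsCoprime z (p:ℤ) := by
  rw [Int.isCoprime_iff_gcd_eq_one]
  have h1 : ¬ p ∣ z.natAbs := by rwa [← Int.natCast_dvd]
  have h2 := ((Nat.Prime.coprime_iff_not_dvd hp).mpr h1).symm
  unfold Int.gcd
  simpa using h2

lemma torsion_smul_pws (a : R) {n : ℤ} (ha : n • a = 0) {x : R} (hx : x ∈ pws a) :
    n • x = 0 := by
  induction hx using Submodule.span_induction with
  | mem y hy => obtain ⟨m, rfl⟩ := hy; exact pw_smul_zero a n ha m
  | zero => simp
  | add y z _ _ h1 h2 => rw [smul_add, h1, h2, add_zero]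
  | smul z y _ h1 => rw [smul_comm, h1, smul_zero]

lemma span_image_finite (a : R) {n : ℤ} (hn : n ≠ 0) (ha : n • a = 0) (D : ℕ) :
    ((span ℤ (pw a '' Set.Iic D) : Submodule ℤ R) : Set R).Finite := by
  set W := span ℤ (pw a '' Set.Iic D) with hWdef
  have hWle : W ≤ pws a := span_le.mpr
    (subset_trans (Set.image_subset_range _ _) subset_span)
  haveI : Module.Finite ℤ W := Module.Finite.span_of_finite ℤ ((Set.finite_Iic D).image _)
  have htor : Module.IsTorsion ℤ W := by
    intro x
    refine ⟨⟨n, mem_nonZeroDivisors_of_ne_zero hn⟩, ?_⟩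
    have hx : n • (x : R) = 0 := torsion_smul_pws a ha (hWle x.2)
    exact Subtype.ext hx
  have : Finite W := Module.finite_of_fg_torsion W htor
  exact Set.finite_coe_iff.mpr this

lemma pws_finite (a : R) {n : ℤ} (hn : n ≠ 0) (ha : n • a = 0) {k : ℕ}
    (hk : pw a k ∈ span ℤ (Set.range fun j => pw a (k + 1 + j))) :
    ((pws a : Set R)).Finite := by
  rw [Finsupp.mem_span_range_iff_exists_finsupp] at hk
  obtain ⟨c, hc⟩ := hk
  have hc' : ∑ j ∈ c.support, c j • pw a (k + 1 + j) = pw a k := hc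
  set D := k + 1 + c.support.sup id with hDdef
  set W := span ℤ (pw a '' Set.Iic D) with hWdef
  have stepB : ∀ p : ℕ, p.Prime → ∀ m : ℕ, pw a m ∈ W ⊔ (p : ℤ) • pws a := by
    intro p hp
    obtain ⟨K₀, hK₀D, hK₀⟩ :
        ∃ K₀, K₀ ≤ D ∧ pw a K₀ ∈ span ℤ (pw a '' Set.Iio K₀) ⊔ (p:ℤ) • pws a := by
      by_cases hJ : (c.support.filter (fun j => ¬ (p:ℤ) ∣ c j)).Nonempty
      · set J := c.support.filter (fun j => ¬ (p:ℤ) ∣ c j) with hJdef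
        set D' := J.max' hJ with hD'def
        have hD'J : D' ∈ J := J.max'_mem hJ
        have hD's : D' ∈ c.support := (Finset.mem_filter.mp hD'J).1
        have hndvd : ¬ (p:ℤ) ∣ c D' := (Finset.mem_filter.mp hD'J).2
        obtain ⟨u, v, huv⟩ := coprime_prime_of_not_dvd p hp _ hndvd
        have hD'le : D' ≤ c.support.sup id := Finset.le_sup (f := id) hD's
        refine ⟨k + 1 + D', by omega, ?_⟩
        set M := span ℤ (pw a '' Set.Iio (k+1+D')) ⊔ (p:ℤ) • pws a with hMdef
        have hmemM : ∀ j ∈ c.support.erase D', c j • pw a (k+1+j) ∈ M := by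
          intro j hj
          have hjne : j ≠ D' := Finset.ne_of_mem_erase hj
          have hjs : j ∈ c.support := Finset.mem_of_mem_erase hj
          rcases lt_or_gt_of_ne hjne with hlt | hgt
          · apply Submodule.mem_sup_left
            exact smul_mem _ _ (subset_span (Set.mem_image_of_mem _ (by
              simp only [Set.mem_Iio]; omega)))
          · have hdvd : (p:ℤ) ∣ c j := by
              by_contra hnd
              have hjJ : j ∈ J := Finset.mem_filter.mpr ⟨hjs, hnd⟩
              have := Finset.le_max' J j hjJ
              omega
            obtain ⟨e, he⟩ := hdvd
            apply Submodule.mem_sup_right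
            rw [he, mul_smul]
            exact mem_psmul_iff.mpr ⟨_, smul_mem _ _ (pw_mem_pws a _), rfl⟩
        have hsplit : c D' • pw a (k+1+D') =
            pw a k - ∑ j ∈ c.support.erase D', c j • pw a (k+1+j) := by
          rw [← hc', ← Finset.add_sum_erase _ _ hD's, add_sub_cancel_right]
        have h1 : c D' • pw a (k+1+D') ∈ M := by
          rw [hsplit]
          apply sub_mem
          · exact Submodule.mem_sup_left (subset_span (Set.mem_image_of_mem _ (by
              simp only [Set.mem_Iio]; omega)))
          · exact Submodule.sum_mem _ hmemM
        have h2 : (p:ℤ) • pw a (k+1+D') ∈ M :=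
          Submodule.mem_sup_right (mem_psmul_iff.mpr ⟨_, pw_mem_pws a _, rfl⟩)
        have hrw : pw a (k+1+D') =
            u • (c D' • pw a (k+1+D')) + v • ((p:ℤ) • pw a (k+1+D')) := by
          rw [smul_smul, smul_smul, ← add_smul, huv, one_smul]
        rw [hrw]
        exact add_mem (smul_mem _ _ h1) (smul_mem _ _ h2)
      · refine ⟨k, by omega, ?_⟩
        apply Submodule.mem_sup_right
        rw [← hc']
        refine Submodule.sum_mem _ fun j hj => ?_
        have hdvd : (p:ℤ) ∣ c j := by
          by_contra hnd
          exact hJ ⟨j, Finset.mem_filter.mpr ⟨hj, hnd⟩⟩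
        obtain ⟨e, he⟩ := hdvd
        rw [he, mul_smul]
        exact mem_psmul_iff.mpr ⟨_, smul_mem _ _ (pw_mem_pws a _), rfl⟩
    intro m
    induction m using Nat.strong_induction_on with
    | _ m ih =>
      by_cases hm : m ≤ D
      · exact Submodule.mem_sup_left (subset_span (Set.mem_image_of_mem _ (Set.mem_Iic.mpr hm)))
      · push_neg at hm
        have hKm : K₀ < m := lt_of_le_of_lt hK₀D hm
        set t := m - K₀ - 1 with htdef
        have hmeq : m = K₀ + t + 1 := by omega
        have hmul : ∀ w ∈ span ℤ (pw a '' Set.Iio K₀), w * pw a t ∈ W ⊔ (p:ℤ) • pws a := by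
          intro w hw
          induction hw using Submodule.span_induction with
          | mem y hy =>
              obtain ⟨i, hi, rfl⟩ := hy
              rw [← pw_add]
              exact ih (i + t + 1) (by simp only [Set.mem_Iio] at hi; omega)
          | zero => rw [zero_mul]; exact zero_mem _
          | add y z _ _ h1 h2 => rw [add_mul]; exact add_mem h1 h2
          | smul z y _ h1 => rw [smul_mul_assoc]; exact smul_mem _ _ h1
        rcases Submodule.mem_sup.mp hK₀ with ⟨w, hw, g, hg, hwg⟩
        have hpwm : pw a m = w * pw a t + g * pw a t := by
          rw [hmeq, pw_add, ← hwg, add_mul]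
        rw [hpwm]
        apply add_mem (hmul w hw)
        rcases mem_psmul_iff.mp hg with ⟨g', hg', rfl⟩
        rw [smul_mul_assoc]
        exact Submodule.mem_sup_right (mem_psmul_iff.mpr ⟨_, mul_pw_mem a t hg', rfl⟩)
  have stepC : ∀ m : ℕ, 1 ≤ m → pws a ≤ W ⊔ (m : ℤ) • pws a := by
    intro m
    induction m using Nat.strong_induction_on with
    | _ m ih =>
      intro hm
      rcases eq_or_lt_of_le hm with h1 | h2
      · rw [← h1]
        push_cast
        rw [one_smul]
        exact le_sup_right
      · have hm1 : m ≠ 1 := by omega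
        have hp : m.minFac.Prime := Nat.minFac_prime hm1
        obtain ⟨m', hmeq⟩ := m.minFac_dvd
        set p := m.minFac
        have hm'1 : 1 ≤ m' := by
          rcases Nat.eq_zero_or_pos m' with h | h
          · subst h; rw [Nat.mul_zero] at hmeq; omega
          · exact h
        have hm'lt : m' < m := by
          have h2p := hp.two_le
          calc m' < 2 * m' := by omega
          _ ≤ p * m' := Nat.mul_le_mul_right _ h2p
          _ = m := hmeq.symm
        have IH := ih m' hm'lt hm'1
        have hB : pws a ≤ W ⊔ (p:ℤ) • pws a := by
          rw [pws, span_le]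
          rintro x ⟨i, rfl⟩
          exact stepB p hp i
        calc pws a ≤ W ⊔ (m':ℤ) • pws a := IH
          _ ≤ W ⊔ (m':ℤ) • (W ⊔ (p:ℤ) • pws a) := sup_le_sup_left (psmul_mono hB) _
          _ = W ⊔ ((m':ℤ) • W ⊔ (m':ℤ) • (p:ℤ) • pws a) := by rw [Submodule.smul_sup']
          _ ≤ W ⊔ (W ⊔ (m:ℤ) • pws a) := by
              apply sup_le_sup_left
              apply sup_le_sup psmul_le_self
              rw [smul_smul]
              have : (m':ℤ) * (p:ℤ) = (m:ℤ) := by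
                rw [mul_comm]
                push_cast [hmeq]
                ring
              rw [this]
          _ = W ⊔ (m:ℤ) • pws a := by rw [← sup_assoc, sup_idem]
  have hle : pws a ≤ W := by
    have hfin := stepC n.natAbs (Int.natAbs_pos.mpr hn)
    intro x hx
    rcases Submodule.mem_sup.mp (hfin hx) with ⟨w, hw, g, hg, hwg⟩
    rcases mem_psmul_iff.mp hg with ⟨g', hg', rfl⟩
    have h0 : (n.natAbs : ℤ) • g' = 0 := by
      have hn0 : n • g' = 0 := torsion_smul_pws a ha hg'
      rcases Int.natAbs_eq n with h | h
      · rw [← h]; exact hn0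
      · rw [← neg_neg ((n.natAbs : ℤ)), ← h, neg_smul, hn0, neg_zero]
    rw [h0, add_zero] at hwg
    rwa [← hwg]
  exact Set.Finite.subset (span_image_finite a hn ha D) hle

open NonUnitalSubring in
lemma infinite_oneGen (R : Type*) [NonUnitalRing R] [Infinite R] :
    Infinite {S : NonUnitalSubring R | ∃ a : R, S = NonUnitalSubring.closure {a}} := by
  set 𝒮 := {S : NonUnitalSubring R | ∃ a : R, S = NonUnitalSubring.closure {a}} with h𝒮
  by_contra hfin
  rw [not_infinite_iff_finite] at hfin
  have hmem : ∀ x : R, NonUnitalSubring.closure ({x} : Set R) ∈ 𝒮 := fun x => ⟨x, rfl⟩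
  by_cases hc : ∃ c : R, ∀ z : ℤ, z • c = 0 → z = 0
  · -- Case 1 : an element of infinite additive order
    obtain ⟨c, hc⟩ := hc
    set F : ℕ → ↥𝒮 := fun i => ⟨closure {(i.factorial : ℤ) • c}, hmem _⟩ with hF
    obtain ⟨S₀, hS₀⟩ := Finite.exists_infinite_fiber F
    have hI : (F ⁻¹' {S₀}).Infinite := Set.infinite_coe_iff.mp hS₀
    obtain ⟨K, hK⟩ := hI.nonempty
    set d := (K.factorial : ℤ) • c with hd
    clear_value d
    have hdord : ∀ z : ℤ, z • d = 0 → z = 0 := by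
      intro z hz
      rw [hd, smul_smul] at hz
      have h0 := hc _ hz
      have hKf : (K.factorial : ℤ) ≠ 0 := Int.natCast_ne_zero.mpr K.factorial_ne_zero
      rcases mul_eq_zero.mp h0 with h | h
      · exact h
      · exact absurd h hKf
    have key : ∀ j : ℕ, 1 ≤ j →
        closure ({((j:ℤ)) • d} : Set R) = closure ({d} : Set R) := by
      intro j hj
      obtain ⟨i, hiI, hilt⟩ := hI.exists_gt (j * K.factorial)
      have hjK : 0 < j * K.factorial := Nat.mul_pos hj K.factorial_pos
      have hdvd : (j * K.factorial) ∣ i.factorial := Nat.dvd_factorial hjK (le_of_lt hilt)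
      obtain ⟨t, ht⟩ := hdvd
      have h1 : closure ({((i.factorial : ℤ)) • c} : Set R) ≤ closure ({(j:ℤ) • d} : Set R) := by
        rw [NonUnitalSubring.closure_le]
        intro x hx
        simp only [Set.mem_singleton_iff] at hx
        subst hx
        have hxx : ((i.factorial : ℤ)) • c = (t:ℤ) • ((j:ℤ) • d) := by
          rw [hd, smul_smul, smul_smul]
          congr 1
          push_cast [ht]
          ring
        rw [hxx]
        have hmem' : (j:ℤ) • d ∈ closure ({(j:ℤ) • d} : Set R) := subset_closure rfl
        exact zsmul_mem hmem' _
      have h2 : closure ({(j:ℤ) • d} : Set R) ≤ closure ({d} : Set R) := by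
        rw [NonUnitalSubring.closure_le]
        intro x hx
        simp only [Set.mem_singleton_iff] at hx
        subst hx
        have hmem' : d ∈ closure ({d} : Set R) := subset_closure rfl
        exact zsmul_mem hmem' _
      have h3 : closure ({d} : Set R) = closure ({(i.factorial : ℤ) • c} : Set R) := by
        have e1 : F K = S₀ := hK
        have e2 : F i = S₀ := hiI
        have e3 : F K = F i := by rw [e1, e2]
        rw [hd]
        exact congrArg Subtype.val e3
      refine le_antisymm h2 ?_
      rw [h3]
      exact h1
    set H := span ℤ (Set.range fun i => pw d (i+1)) with hH
    have hrel : ∀ j : ℕ, 1 ≤ j → ∃ z : ℤ, (1 - z * j) • d ∈ H := by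
      intro j hj
      have hdj : d ∈ closure ({(j:ℤ) • d} : Set R) := by
        rw [key j hj]
        exact subset_closure rfl
      rw [mem_closure_singleton_iff, pws, Finsupp.mem_span_range_iff_exists_finsupp] at hdj
      obtain ⟨c', hc'⟩ := hdj
      have hc2 : ∑ i ∈ c'.support, c' i • pw ((j:ℤ) • d) i = d := hc'
      have hc'' : ∑ i ∈ c'.support, (c' i * (j:ℤ)^(i+1)) • pw d i = d := by
        have hcongr : ∑ i ∈ c'.support, (c' i * (j:ℤ)^(i+1)) • pw d i
            = ∑ i ∈ c'.support, c' i • pw ((j:ℤ) • d) i :=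
          Finset.sum_congr rfl fun i _ => by rw [pw_zsmul, smul_smul]
        rw [hcongr, hc2]
      have hterm : ∀ i ∈ c'.support.erase 0, (c' i * (j:ℤ)^(i+1)) • pw d i ∈ H := by
        intro i hi
        have hine : i ≠ 0 := Finset.ne_of_mem_erase hi
        apply smul_mem
        apply subset_span
        refine ⟨i - 1, ?_⟩
        show pw d (i - 1 + 1) = pw d i
        have hieq : i - 1 + 1 = i := by omega
        rw [hieq]
      by_cases h0 : 0 ∈ c'.support
      · refine ⟨c' 0, ?_⟩
        have hsplit := Finset.add_sum_erase c'.support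
          (fun i => (c' i * (j:ℤ)^(i+1)) • pw d i) h0
        rw [hc''] at hsplit
        simp only [pw_zero, pow_one] at hsplit
        have heq2 : (1 - c' 0 * j) • d
            = ∑ i ∈ c'.support.erase 0, (c' i * (j:ℤ)^(i+1)) • pw d i := by
          linear_combination (norm := module) -hsplit
        rw [heq2]
        exact Submodule.sum_mem _ hterm
      · refine ⟨0, ?_⟩
        have herase : c'.support.erase 0 = c'.support := Finset.erase_eq_of_notMem h0
        rw [zero_mul, sub_zero, one_smul, ← hc'']
        apply Submodule.sum_mem
        intro i hi
        exact hterm i (by rw [herase]; exact hi)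
    have hdH : d ∈ H := by
      obtain ⟨z₂, hz₂⟩ := hrel 2 (by norm_num)
      set M : ℤ := 1 - z₂ * 2 with hM
      have hMne : M ≠ 0 := by omega
      have hMnat : 1 ≤ M.natAbs := by omega
      obtain ⟨z', hz'⟩ := hrel M.natAbs hMnat
      have hMH : ((M.natAbs : ℤ)) • d ∈ H := by
        rcases Int.natAbs_eq M with h | h
        · rw [← h]; exact hz₂
        · have : ((M.natAbs : ℤ)) • d = -(M • d) := by
            rw [h]; simp
          rw [this]
          exact neg_mem hz₂
      have hcomb : d = (1 - z' * M.natAbs) • d + z' • (((M.natAbs : ℤ)) • d) := by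
        module
      rw [hcomb]
      exact add_mem hz' (smul_mem _ _ hMH)
    rw [hH, Finsupp.mem_span_range_iff_exists_finsupp] at hdH
    obtain ⟨e, he⟩ := hdH
    set v := ∑ i ∈ e.support, e i • pw d i with hv
    clear_value v
    have he' : ∑ i ∈ e.support, e i • pw d (i+1) = d := he
    have hvd : v * d = d := by
      have hstep : v * d = ∑ i ∈ e.support, e i • pw d (i+1) := by
        rw [hv, Finset.sum_mul]
        refine Finset.sum_congr rfl fun i _ => ?_
        rw [smul_mul_assoc, pw_succ]
      rw [hstep, he']
    have hdv : d * v = d := by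
      have hcomm : d * v = v * d := by
        rw [hv, Finset.mul_sum, Finset.sum_mul]
        refine Finset.sum_congr rfl fun i _ => ?_
        rw [mul_smul_comm, smul_mul_assoc]
        congr 1
        have hpc := pw_comm d 0 i
        simpa using hpc
      rw [hcomm, hvd]
    have hpwv : ∀ i : ℕ, pw d i * v = pw d i := by
      intro i
      cases i with
      | zero => exact hdv
      | succ i => rw [pw_succ, mul_assoc, hdv]
    have hvv : v * v = v := by
      have hstep : v * v = ∑ i ∈ e.support, e i • pw d i := by
        nth_rewrite 1 [hv]
        rw [Finset.sum_mul]
        exact Finset.sum_congr rfl fun i _ => by simp only [smul_mul_assoc, hpwv]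
      rw [hstep, ← hv]
    have hvord : ∀ z : ℤ, z • v = 0 → z = 0 := by
      intro z hz
      apply hdord
      rw [← hvd, ← smul_mul_assoc, hz, zero_mul]
    have hvmem : ∀ (z : ℤ) (x : R), x ∈ closure ({z • v} : Set R) → ∃ w : ℤ, x = (w * z) • v := by
      intro z x hx
      rw [mem_closure_singleton_iff] at hx
      have hsub : pws (z • v) ≤ span ℤ ({z • v} : Set R) := by
        rw [pws, span_le]
        rintro y ⟨i, rfl⟩
        rw [pw_zsmul, pw_idem v hvv]
        have : z ^ (i+1) • v = z^i • (z • v) := by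
          rw [smul_smul, ← pow_succ]
        rw [this]
        exact smul_mem _ _ (subset_span rfl)
      have := hsub hx
      rw [Submodule.mem_span_singleton] at this
      obtain ⟨w, hw⟩ := this
      exact ⟨w, by rw [← hw, smul_smul]⟩
    set G : ℕ → ↥𝒮 := fun m => ⟨closure {((m:ℤ)+1) • v}, hmem _⟩ with hG
    obtain ⟨m₁, m₂, hmne, hmeq⟩ := Finite.exists_ne_map_eq_of_infinite G
    have hminj : ∀ m₁ m₂ : ℕ,
        closure ({((m₁:ℤ)+1) • v} : Set R) = closure ({((m₂:ℤ)+1) • v} : Set R) →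
        ((m₂:ℤ)+1) ∣ ((m₁:ℤ)+1) := by
      intro m₁ m₂ hcl
      have h1 : ((m₁:ℤ)+1) • v ∈ closure ({((m₂:ℤ)+1) • v} : Set R) := by
        rw [← hcl]
        exact subset_closure rfl
      obtain ⟨w, hw⟩ := hvmem _ _ h1
      have : ((m₁:ℤ)+1 - w * ((m₂:ℤ)+1)) • v = 0 := by
        rw [sub_smul, hw, sub_self]
      have h2 := hvord _ this
      exact ⟨w, by linear_combination h2⟩
    have hcl12 : closure ({((m₁:ℤ)+1) • v} : Set R) = closure ({((m₂:ℤ)+1) • v} : Set R) :=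
      congrArg Subtype.val hmeq
    have d1 := hminj m₁ m₂ hcl12
    have d2 := hminj m₂ m₁ hcl12.symm
    have : (m₁ : ℤ) + 1 = (m₂ : ℤ) + 1 :=
      Int.dvd_antisymm (by omega) (by omega) d2 d1
    exact hmne (by omega)
  · -- Case 2 : torsion
    push_neg at hc
    have hEx : ∃ a : R, ((closure ({a} : Set R) : Set R)).Infinite := by
      by_contra hAll
      push_neg at hAll
      have hcover : (Set.univ : Set R) ⊆ ⋃ S ∈ 𝒮, (S : Set R) := by
        intro x _
        exact Set.mem_biUnion (hmem x) (subset_closure rfl)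
      have hSfin : 𝒮.Finite := Set.toFinite 𝒮
      have hfin2 : (⋃ S ∈ 𝒮, (S : Set R)).Finite := by
        apply Set.Finite.biUnion hSfin
        rintro S ⟨a, rfl⟩
        exact hAll a
      have := Set.Finite.subset hfin2 hcover
      exact Set.infinite_univ this
    obtain ⟨a, hainf⟩ := hEx
    obtain ⟨nz, hnza, hnz0⟩ := hc a
    have main : ∀ k k' : ℕ, k < k' →
        closure ({pw a k} : Set R) = closure ({pw a k'} : Set R) → False := by
      intro k k' hkk' hcl
      have h1 : pw a k ∈ pws (pw a k') := by
        rw [← mem_closure_singleton_iff, ← hcl]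
        exact subset_closure rfl
      have h2 : pws (pw a k') ≤ span ℤ (Set.range fun j => pw a (k + 1 + j)) := by
        rw [pws, span_le]
        rintro x ⟨i, rfl⟩
        rw [pw_pw]
        apply subset_span
        refine ⟨k' + i * (k'+1) - (k+1), ?_⟩
        show pw a (k + 1 + (k' + i * (k'+1) - (k+1))) = pw a (k' + i * (k'+1))
        generalize i * (k' + 1) = X
        congr 1
        omega
      have hfinset := pws_finite a hnz0 hnza (h2 h1)
      apply hainf
      apply Set.Finite.subset hfinset
      rw [closure_carrier_eq_pws]
    set G : ℕ → ↥𝒮 := fun k => ⟨closure {pw a k}, hmem _⟩ with hG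
    obtain ⟨k₁, k₂, hne, heq⟩ := Finite.exists_ne_map_eq_of_infinite G
    rcases lt_or_gt_of_ne hne with h | h
    · exact main k₁ k₂ h (congrArg Subtype.val heq)
    · exact main k₂ k₁ h (congrArg Subtype.val heq).symm

end Stmt2Aux

open Cardinal

/-- If `R` is an infinite (possibly nonunital) ring, then the number of one-generated
subrings of `R` equals the cardinality of `R`. -/
theorem stmt_2 (R : Type*) [NonUnitalRing R] [Infinite R] :
    #{S : NonUnitalSubring R | ∃ a : R, S = NonUnitalSubring.closure {a}} = #R := by
  classical
  haveI hinf : Infinite {S : NonUnitalSubring R | ∃ a : R, S = NonUnitalSubring.closure {a}} :=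
    Stmt2Aux.infinite_oneGen R
  set 𝒮 := {S : NonUnitalSubring R | ∃ a : R, S = NonUnitalSubring.closure {a}} with h𝒮
  apply le_antisymm
  · have hsurj : Function.Surjective
        (fun a : R => (⟨NonUnitalSubring.closure {a}, ⟨a, rfl⟩⟩ : ↥𝒮)) := by
      rintro ⟨S, a, rfl⟩
      exact ⟨a, rfl⟩
    exact Cardinal.mk_le_of_surjective hsurj
  · choose gen hgen using fun S : ↥𝒮 => S.2
    have hx : ∀ x : R, ∃ c : ℕ →₀ ℤ,
        (c.sum fun i r => r • Stmt2Aux.pw (gen ⟨NonUnitalSubring.closure {x}, ⟨x, rfl⟩⟩) i)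
          = x := by
      intro x
      set S : ↥𝒮 := ⟨NonUnitalSubring.closure {x}, ⟨x, rfl⟩⟩ with hSdef
      have hxS : x ∈ (S : NonUnitalSubring R) := NonUnitalSubring.subset_closure rfl
      rw [hgen S] at hxS
      rw [Stmt2Aux.mem_closure_singleton_iff, Stmt2Aux.pws,
        Finsupp.mem_span_range_iff_exists_finsupp] at hxS
      exact hxS
    choose coef hcoef using hx
    have hinj : Function.Injective
        (fun x : R =>
          ((⟨NonUnitalSubring.closure {x}, ⟨x, rfl⟩⟩ : ↥𝒮), ULift.up.{_, 0} (coef x))) := by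
      intro x y hxy
      simp only [Prod.mk.injEq, ULift.up_inj] at hxy
      obtain ⟨h1, h2⟩ := hxy
      have hc1 := hcoef x
      have hc2 := hcoef y
      rw [← hc1, ← hc2, h1, h2]
    have hle := Cardinal.mk_le_of_injective hinj
    rw [Cardinal.mk_prod, Cardinal.lift_id, Cardinal.lift_id] at hle
    have hF : #(ULift.{_, 0} (ℕ →₀ ℤ)) = ℵ₀ := Cardinal.mk_eq_aleph0 _
    rw [hF] at hle
    have hmax : #↥𝒮 * ℵ₀ = #↥𝒮 := by
      rw [Cardinal.mul_eq_max (Cardinal.aleph0_le_mk _) le_rfl]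
      exact max_eq_left (Cardinal.aleph0_le_mk _)
    rwa [hmax] at hle
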